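/- Let H be a real Hilbert space, S ⊂ H a nonempty closed convex set, and 0 < τ̲ < τ̄ < 2. Let (p^k) be a sequence in H and, for each k, let φ_k(p) = ⟪g_k, p⟫ + c_k be an affine functional such that φ_k(p) ≤ 0 for all p ∈ S, and suppose that for each k: if φ_k(p^k) > 0 then p^{k+1} = p^k − τ_k (φ_k(p^k)/‖g_k‖²) g_k for some τ_k ∈ [τ̲, τ̄], and otherwise p^{k+1} = p^k. If there exists ξ > 0 with ‖g_k‖ ≤ ξ for all k ≥ 0, then limsup_{k→∞} φ_k(p^k) ≤ 0. -/

import Mathlib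

open scoped RealInnerProductSpace

/-- If the gradients of the separators in the generic linear
separation–projection method are uniformly bounded by some `ξ > 0`, then
`limsup φ_k(pᵏ) ≤ 0`. -/
theorem separation_projection_limsup_nonpos {H : Type*} [NormedAddCommGroup H]
    [InnerProductSpace ℝ H] [CompleteSpace H]
    (S : Set H) (hSne : S.Nonempty) (hScl : IsClosed S) (hScv : Convex ℝ S)
    (τmin τmax : ℝ) (hτ0 : 0 < τmin) (hτ1 : τmin < τmax) (hτ2 : τmax < 2)
    (p : ℕ → H) (g : ℕ → H) (c : ℕ → ℝ)
    (hsep : ∀ k, ∀ q ∈ S, ⟪g k, q⟫ + c k ≤ 0)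
    (hstep : ∀ k,
      (0 < ⟪g k, p k⟫ + c k →
        ∃ τ ∈ Set.Icc τmin τmax,
          p (k + 1) = p k - ((τ * (⟪g k, p k⟫ + c k)) / ‖g k‖ ^ 2) • g k) ∧
      (⟪g k, p k⟫ + c k ≤ 0 → p (k + 1) = p k))
    (ξ : ℝ) (hξ : 0 < ξ) (hg : ∀ k, ‖g k‖ ≤ ξ) :
    Filter.limsup (fun k => ⟪g k, p k⟫ + c k) Filter.atTop ≤ 0 := by
  obtain ⟨q, hq⟩ := hSne
  set φ : ℕ → ℝ := fun k => ⟪g k, p k⟫ + c k with hφdef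
  set d : ℕ → ℝ := fun k => max (φ k) 0 with hddef
  set α : ℝ := τmin * (2 - τmax) with hαdef
  have hα0 : (0:ℝ) < α := mul_pos hτ0 (by linarith)
  have hξ2 : (0:ℝ) < ξ ^ 2 := by positivity
  have hd0 : ∀ k, 0 ≤ d k := fun k => le_max_right _ _
  -- key Fejér decrease inequality
  have key : ∀ k, α * d k ^ 2 / ξ ^ 2 ≤ ‖p k - q‖ ^ 2 - ‖p (k+1) - q‖ ^ 2 := by
    intro k
    rcases le_or_gt (φ k) 0 with h | h
    · have hp : p (k+1) = p k := (hstep k).2 h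
      have hdk : d k = 0 := max_eq_right h
      rw [hp, hdk]
      simp
    · obtain ⟨τ, hτ, hstepk⟩ := (hstep k).1 h
      have hdk : d k = φ k := max_eq_left h.le
      have hgne : g k ≠ 0 := by
        intro h0
        have hs := hsep k q hq
        have : φ k = c k := by simp [hφdef, h0]
        rw [h0] at hs
        simp at hs
        rw [this] at h
        linarith
      have hgpos : (0:ℝ) < ‖g k‖ := norm_pos_iff.mpr hgne
      have hn2 : (0:ℝ) < ‖g k‖ ^ 2 := by positivity
      have hn2ξ : ‖g k‖ ^ 2 ≤ ξ ^ 2 :=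
        pow_le_pow_left₀ (norm_nonneg _) (hg k) 2
      set t : ℝ := (τ * φ k) / ‖g k‖ ^ 2 with htdef
      have hexp : ‖p (k+1) - q‖ ^ 2
          = ‖p k - q‖ ^ 2 - 2 * t * ⟪p k - q, g k⟫ + t ^ 2 * ‖g k‖ ^ 2 := by
        have : p (k+1) - q = (p k - q) - t • g k := by
          rw [hstepk]; abel
        rw [this, norm_sub_sq_real, real_inner_smul_right, norm_smul]
        simp [mul_pow]
        ring
      have hip : φ k ≤ ⟪p k - q, g k⟫ := by
        have hs := hsep k q hq
        have : ⟪p k - q, g k⟫ = ⟪g k, p k⟫ - ⟪g k, q⟫ := by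
          rw [real_inner_comm, inner_sub_right]
        rw [this]
        simp only [hφdef]
        linarith
      have hτ1' : τmin ≤ τ := hτ.1
      have hτ2' : τ ≤ τmax := hτ.2
      have ht0 : 0 < t := by
        apply div_pos (mul_pos (by linarith) h) hn2
      -- decrement bound
      have hdec : τ * (2 - τ) * φ k ^ 2 / ‖g k‖ ^ 2
          ≤ ‖p k - q‖ ^ 2 - ‖p (k+1) - q‖ ^ 2 := by
        rw [hexp]
        have h1 : 2 * t * φ k ≤ 2 * t * ⟪p k - q, g k⟫ := by
          apply mul_le_mul_of_nonneg_left hip (by linarith)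
        have ht2 : t ^ 2 * ‖g k‖ ^ 2 = τ ^ 2 * φ k ^ 2 / ‖g k‖ ^ 2 := by
          rw [htdef]; field_simp
        have htφ : 2 * t * φ k = 2 * τ * φ k ^ 2 / ‖g k‖ ^ 2 := by
          rw [htdef]; field_simp
        have : τ * (2 - τ) * φ k ^ 2 / ‖g k‖ ^ 2
            = 2 * t * φ k - t ^ 2 * ‖g k‖ ^ 2 := by
          rw [ht2, htφ]; ring
        rw [this]
        linarith
      have hαle : α * φ k ^ 2 ≤ τ * (2 - τ) * φ k ^ 2 := by
        have : α ≤ τ * (2 - τ) := by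
          apply mul_le_mul hτ1' (by linarith) (by linarith) (by linarith)
        nlinarith [sq_nonneg (φ k)]
      have hfrac : α * φ k ^ 2 / ξ ^ 2 ≤ α * φ k ^ 2 / ‖g k‖ ^ 2 := by
        gcongr
      have hmono : α * φ k ^ 2 / ‖g k‖ ^ 2 ≤ τ * (2 - τ) * φ k ^ 2 / ‖g k‖ ^ 2 := by
        gcongr
      rw [hdk]
      linarith
  -- partial sums are bounded, so the terms tend to 0
  have hsum : ∀ n, ∑ k ∈ Finset.range n, α * d k ^ 2 / ξ ^ 2 ≤ ‖p 0 - q‖ ^ 2 := by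
    intro n
    calc ∑ k ∈ Finset.range n, α * d k ^ 2 / ξ ^ 2
        ≤ ∑ k ∈ Finset.range n, (‖p k - q‖ ^ 2 - ‖p (k+1) - q‖ ^ 2) :=
          Finset.sum_le_sum fun k _ => key k
      _ = ‖p 0 - q‖ ^ 2 - ‖p n - q‖ ^ 2 := Finset.sum_range_sub' _ _
      _ ≤ ‖p 0 - q‖ ^ 2 := by nlinarith [sq_nonneg ‖p n - q‖]
  have hsummable : Summable (fun k => α * d k ^ 2 / ξ ^ 2) := by
    apply summable_of_sum_range_le (fun k => by positivity) hsum
  have hterm : Filter.Tendsto (fun k => α * d k ^ 2 / ξ ^ 2) Filter.atTop (nhds 0) :=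
    hsummable.tendsto_atTop_zero
  have hd2 : Filter.Tendsto (fun k => d k ^ 2) Filter.atTop (nhds 0) := by
    have := hterm.const_mul (ξ ^ 2 / α)
    simp only [mul_zero] at this
    convert this using 2 with k
    field_simp
  have hdto : Filter.Tendsto d Filter.atTop (nhds 0) := by
    have hsq : Filter.Tendsto (fun k => Real.sqrt (d k ^ 2)) Filter.atTop (nhds 0) := by
      have := (Real.continuous_sqrt.tendsto 0).comp hd2
      simpa [Function.comp_def] using this
    refine hsq.congr fun k => ?_
    rw [Real.sqrt_sq (hd0 k)]
  -- conclude limsup ≤ 0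
  rw [Filter.limsup_eq]
  by_cases hbdd : BddBelow {a : ℝ | ∀ᶠ k in Filter.atTop, φ k ≤ a}
  · apply le_of_forall_pos_le_add
    intro ε hε
    have hmem : ε ∈ {a : ℝ | ∀ᶠ k in Filter.atTop, φ k ≤ a} := by
      have := hdto.eventually (gt_mem_nhds hε)
      filter_upwards [this] with k hk
      exact le_trans (le_max_left _ _) hk.le
    have := csInf_le hbdd hmem
    linarith
  · rw [Real.sInf_of_not_bddBelow hbdd]
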